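/- Given f : ℕ → ℕ, define a₀ = 0 and a_{n+1} = 1 + max(aₙ, f(aₙ)), and let X_f be the union of the intervals [a_{2n}, a_{2n+1}). If Y ⊆ ℕ is infinite and the function g sending each n to the least element of Y greater than n satisfies g ≤* f, then X_f splits Y (i.e., Y ∩ X_f and Y \ X_f are both infinite). -/
import Mathlib


/-- Given `f`, the interval endpoints `a₀ = 0`, `a_{n+1} = 1 + max(aₙ, f(aₙ))`, and
`X_f = ⋃ₙ [a_{2n}, a_{2n+1})`.  If `Y` is infinite and the "next element of `Y`"
function `g` satisfies `g ≤* f`, then `X_f` splits `Y`. -/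
theorem stmt1 (f : ℕ → ℕ) (a : ℕ → ℕ)
    (ha0 : a 0 = 0) (haS : ∀ n, a (n + 1) = 1 + max (a n) (f (a n)))
    (X : Set ℕ) (hX : X = ⋃ n : ℕ, Set.Ico (a (2 * n)) (a (2 * n + 1)))
    (Y : Set ℕ) (hY : Y.Infinite)
    (g : ℕ → ℕ)
    (hg : ∀ n, g n ∈ Y ∧ n < g n ∧ ∀ m ∈ Y, n < m → g n ≤ m)
    (hgf : ∀ᶠ n in Filter.atTop, g n ≤ f n) :
    (Y ∩ X).Infinite ∧ (Y \ X).Infinite := by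
  obtain ⟨N, hN⟩ := Filter.eventually_atTop.mp hgf
  have hmono : StrictMono a := by
    apply strictMono_nat_of_lt_succ
    intro n
    rw [haS n]
    omega
  have hle : ∀ n, n ≤ a n := fun n => hmono.le_apply
  -- key: for k with a k ≥ N, g (a k) lies in (a k, a (k+1))
  have key : ∀ k, N ≤ a k → a k < g (a k) ∧ g (a k) < a (k + 1) := by
    intro k hk
    refine ⟨(hg (a k)).2.1, ?_⟩
    have h1 : g (a k) ≤ f (a k) := hN _ hk
    rw [haS k]
    omega
  constructor
  · apply Set.infinite_of_forall_exists_gt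
    intro M
    set k := 2 * (max N M + 1) with hk
    have hak : N ≤ a k := le_trans (by omega) (hle k)
    obtain ⟨h1, h2⟩ := key k hak
    refine ⟨g (a k), ⟨(hg (a k)).1, ?_⟩, ?_⟩
    · rw [hX]
      exact Set.mem_iUnion.mpr ⟨max N M + 1, ⟨le_of_lt h1, by simpa using h2⟩⟩
    · have := hle k
      omega
  · apply Set.infinite_of_forall_exists_gt
    intro M
    set k := 2 * (max N M + 1) + 1 with hk
    have hak : N ≤ a k := le_trans (by omega) (hle k)
    obtain ⟨h1, h2⟩ := key k hak
    refine ⟨g (a k), ⟨(hg (a k)).1, ?_⟩, ?_⟩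
    · rw [hX]
      intro hmem
      obtain ⟨m, hm⟩ := Set.mem_iUnion.mp hmem
      obtain ⟨hm1, hm2⟩ := hm
      rcases le_or_gt (2 * m + 1) k with h | h
      · have : a (2 * m + 1) ≤ a k := hmono.monotone h
        omega
      · have : a (k + 1) ≤ a (2 * m) := hmono.monotone (by omega)
        omega
    · have := hle k
      omega
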